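/- arXiv:2001.05072 — 2 statements merged into one kernel-verified Lean document; each statement's English description precedes it below -/
import Mathlib

section
/- Let τ₁, τ₂, v₁, v₂, w₁, w₂ be real numbers. Define the numerical fluxes v* = (v₁+v₂)/2 − τ₁(w₁+w₂), w₁* = (w₁−w₂)/2 − τ₂(v₁−v₂), and w₂* = (w₂−w₁)/2 − τ₂(v₂−v₁). Then the total face contribution to the discrete energy rate satisfies the identity w₁(v* − v₁) + w₂(v* − v₂) + v₁ w₁* + v₂ w₂* = −τ₁(w₁+w₂)² − τ₂(v₁−v₂)². In particular, if τ₁ ≥ 0 and τ₂ ≥ 0, this quantity is ≤ 0. -/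
/-- The face contribution to the discrete energy rate of the energy-based DG method
with upwind-type fluxes equals −τ₁(w₁+w₂)² − τ₂(v₁−v₂)², and is ≤ 0 for τ₁, τ₂ ≥ 0. -/
theorem dg_face_energy_contribution
    (τ₁ τ₂ v₁ v₂ w₁ w₂ vstar w₁star w₂star : ℝ)
    (hv : vstar = (v₁ + v₂) / 2 - τ₁ * (w₁ + w₂))
    (hw₁ : w₁star = (w₁ - w₂) / 2 - τ₂ * (v₁ - v₂))
    (hw₂ : w₂star = (w₂ - w₁) / 2 - τ₂ * (v₂ - v₁)) :
    w₁ * (vstar - v₁) + w₂ * (vstar - v₂) + v₁ * w₁star + v₂ * w₂star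
      = -τ₁ * (w₁ + w₂) ^ 2 - τ₂ * (v₁ - v₂) ^ 2
    ∧ (0 ≤ τ₁ → 0 ≤ τ₂ →
        w₁ * (vstar - v₁) + w₂ * (vstar - v₂) + v₁ * w₁star + v₂ * w₂star ≤ 0) := by
  subst hv hw₁ hw₂
  constructor
  · ring
  · intro h1 h2
    nlinarith [sq_nonneg (w₁ + w₂), sq_nonneg (v₁ - v₂), mul_nonneg h1 (sq_nonneg (w₁ + w₂)), mul_nonneg h2 (sq_nonneg (v₁ - v₂))]
end

section
/- Let h_x > 0, h_y > 0, Δt > 0, c ∈ ℝ, and fix a center (x_c, y_c) ∈ ℝ² and time t_n ∈ ℝ. Let (û_{k,l,s}) and (v̂_{k,l,s}) be finitely supported families of real coefficients and define the polynomials p(x,y,t) = Σ_{k,l,s} û_{k,l,s} ((x−x_c)/h_x)^k ((y−y_c)/h_y)^l ((t−t_n)/Δt)^s and q(x,y,t) = Σ_{k,l,s} v̂_{k,l,s} ((x−x_c)/h_x)^k ((y−y_c)/h_y)^l ((t−t_n)/Δt)^s. If ∂ₜp = q and ∂ₜq = c² (∂ₓₓp + ∂_{yy}p) hold identically on ℝ³,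 then for all natural numbers k, l, s: (s+1) û_{k,l,s+1} = Δt v̂_{k,l,s} and (s+1) v̂_{k,l,s+1} = c² (k+2)(k+1) (Δt/h_x²) û_{k+2,l,s} + c² (l+2)(l+1) (Δt/h_y²) û_{k,l+2,s}. -/
open Finset
open Finset
lemma one_var_coeff (N : ℕ) (c : ℕ → ℝ)
    (h : ∀ x : ℝ, ∑ k ∈ range N, c k * x ^ k = 0) :
    ∀ k < N, c k = 0 := by
  intro k hk
  have hP : (∑ i ∈ range N, Polynomial.C (c i) * Polynomial.X ^ i : Polynomial ℝ) = 0 := by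
    apply Polynomial.funext
    intro x
    simpa [Polynomial.eval_finset_sum] using h x
  have := congrArg (fun P => Polynomial.coeff P k) hP
  simp only [Polynomial.finset_sum_coeff, Polynomial.coeff_C_mul, Polynomial.coeff_X_pow,
    Polynomial.coeff_zero, mul_ite, mul_one, mul_zero] at this
  rw [Finset.sum_ite_eq (range N) k c] at this
  simpa [hk] using this

lemma three_var_coeff (N : ℕ) (a : ℕ → ℕ → ℕ → ℝ)
    (h : ∀ x y t : ℝ, ∑ k ∈ range N, ∑ l ∈ range N, ∑ s ∈ range N,
        a k l s * x ^ k * y ^ l * t ^ s = 0) :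
    ∀ k l s, k < N → l < N → s < N → a k l s = 0 := by
  intro k l s hk hl hs
  have h1 : ∀ y t : ℝ, ∑ l ∈ range N, ∑ s ∈ range N, a k l s * y ^ l * t ^ s = 0 := by
    intro y t
    refine one_var_coeff N (fun k => ∑ l ∈ range N, ∑ s ∈ range N, a k l s * y ^ l * t ^ s) ?_ k hk
    intro x
    rw [← h x y t]
    refine Finset.sum_congr rfl fun k _ => ?_
    rw [Finset.sum_mul]
    refine Finset.sum_congr rfl fun l _ => ?_
    rw [Finset.sum_mul]
    exact Finset.sum_congr rfl fun s _ => by ring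
  have h2 : ∀ t : ℝ, ∑ s ∈ range N, a k l s * t ^ s = 0 := by
    intro t
    refine one_var_coeff N (fun l => ∑ s ∈ range N, a k l s * t ^ s) ?_ l hl
    intro y
    rw [← h1 y t]
    refine Finset.sum_congr rfl fun l _ => ?_
    rw [Finset.sum_mul]
    exact Finset.sum_congr rfl fun s _ => by ring
  exact one_var_coeff N (fun s => a k l s) h2 s hs
open Finset
lemma hd_triple (N : ℕ) (coef : ℕ → ℕ → ℕ → ℝ) (e : ℕ → ℕ → ℕ → ℕ) (x0 d t : ℝ) :
    HasDerivAt (fun τ => ∑ k ∈ range N, ∑ l ∈ range N, ∑ s ∈ range N,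
        coef k l s * ((τ - x0) / d) ^ (e k l s))
      (∑ k ∈ range N, ∑ l ∈ range N, ∑ s ∈ range N,
        coef k l s * ((e k l s : ℝ) * ((t - x0) / d) ^ (e k l s - 1) * (1 / d))) t := by
  apply HasDerivAt.fun_sum
  intro k _
  apply HasDerivAt.fun_sum
  intro l _
  apply HasDerivAt.fun_sum
  intro s _
  exact ((((hasDerivAt_id t).sub_const x0).div_const d).pow (e k l s)).const_mul _

lemma shift1 (M : ℕ) (f g : ℕ → ℝ) (h0 : f 0 = 0) (hsucc : ∀ s, f (s + 1) = g s)
    (htop : g (M + 1) = 0) :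
    ∑ s ∈ range (M + 2), f s = ∑ s ∈ range (M + 2), g s := by
  rw [Finset.sum_range_succ' f, Finset.sum_range_succ g]
  simp [h0, htop, hsucc]

lemma shift2 (M : ℕ) (f g : ℕ → ℝ) (h0 : f 0 = 0) (h1 : f 1 = 0)
    (hsucc : ∀ k, f (k + 2) = g k) (ht1 : g M = 0) (ht2 : g (M + 1) = 0) :
    ∑ k ∈ range (M + 2), f k = ∑ k ∈ range (M + 2), g k := by
  rw [Finset.sum_range_succ' f, Finset.sum_range_succ' (fun i => f (i + 1)),
    Finset.sum_range_succ g, Finset.sum_range_succ g]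
  simp [h0, h1, ht1, ht2, hsucc]
open Finset
lemma finsum_triple_eq (N : ℕ) (a : ℕ → ℕ → ℕ → ℝ)
    (ha : ∀ k l s, N ≤ k ∨ N ≤ l ∨ N ≤ s → a k l s = 0) (g1 g2 g3 : ℕ → ℝ) :
    (∑ᶠ (k : ℕ) (l : ℕ) (s : ℕ), a k l s * g1 k * g2 l * g3 s)
      = ∑ k ∈ range N, ∑ l ∈ range N, ∑ s ∈ range N, a k l s * g1 k * g2 l * g3 s := by
  have h3 : ∀ k l : ℕ, (∑ᶠ s : ℕ, a k l s * g1 k * g2 l * g3 s)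
      = ∑ s ∈ range N, a k l s * g1 k * g2 l * g3 s := by
    intro k l
    apply finsum_eq_finset_sum_of_support_subset
    intro s hs
    simp only [Function.mem_support] at hs
    simp only [Finset.coe_range, Set.mem_Iio]
    by_contra hc
    exact hs (by rw [ha k l s (Or.inr (Or.inr (le_of_not_gt hc)))]; ring)
  have h2 : ∀ k : ℕ, (∑ᶠ (l : ℕ) (s : ℕ), a k l s * g1 k * g2 l * g3 s)
      = ∑ l ∈ range N, ∑ s ∈ range N, a k l s * g1 k * g2 l * g3 s := by
    intro k
    rw [finsum_congr (h3 k)]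
    apply finsum_eq_finset_sum_of_support_subset
    intro l hl
    simp only [Function.mem_support] at hl
    simp only [Finset.coe_range, Set.mem_Iio]
    by_contra hc
    exact hl (Finset.sum_eq_zero fun s _ => by
      rw [ha k l s (Or.inr (Or.inl (le_of_not_gt hc)))]; ring)
  rw [finsum_congr h2]
  apply finsum_eq_finset_sum_of_support_subset
  intro k hk
  simp only [Function.mem_support] at hk
  simp only [Finset.coe_range, Set.mem_Iio]
  by_contra hc
  exact hk (Finset.sum_eq_zero fun l _ => Finset.sum_eq_zero fun s _ => by
    rw [ha k l s (Or.inl (le_of_not_gt hc))]; ring)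

/-- Two-dimensional Hermite method recursion relations for the scaled space–time
Taylor coefficients: if p, q satisfy ∂ₜp = q and ∂ₜq = c² (∂ₓₓp + ∂_yy p)
identically, then (s+1) û_{k,l,s+1} = Δt v̂_{k,l,s} and
(s+1) v̂_{k,l,s+1} = c²(k+2)(k+1)(Δt/hₓ²) û_{k+2,l,s} + c²(l+2)(l+1)(Δt/h_y²) û_{k,l+2,s}. -/
theorem hermite_taylor_recursion_2d
    (hx hy Δt : ℝ) (hhx : 0 < hx) (hhy : 0 < hy) (hΔt : 0 < Δt) (c : ℝ)
    (xc yc tn : ℝ)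
    (uhat vhat : ℕ → ℕ → ℕ → ℝ)
    (hus : (Function.support fun p : ℕ × ℕ × ℕ => uhat p.1 p.2.1 p.2.2).Finite)
    (hvs : (Function.support fun p : ℕ × ℕ × ℕ => vhat p.1 p.2.1 p.2.2).Finite)
    (p q : ℝ → ℝ → ℝ → ℝ)
    (hp : ∀ x y t, p x y t = ∑ᶠ (k : ℕ) (l : ℕ) (s : ℕ),
        uhat k l s * ((x - xc) / hx) ^ k * ((y - yc) / hy) ^ l * ((t - tn) / Δt) ^ s)
    (hq : ∀ x y t, q x y t = ∑ᶠ (k : ℕ) (l : ℕ) (s : ℕ),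
        vhat k l s * ((x - xc) / hx) ^ k * ((y - yc) / hy) ^ l * ((t - tn) / Δt) ^ s)
    (eq1 : ∀ x y t, deriv (fun τ => p x y τ) t = q x y t)
    (eq2 : ∀ x y t, deriv (fun τ => q x y τ) t
        = c ^ 2 * (deriv (fun ξ => deriv (fun ζ => p ζ y t) ξ) x
            + deriv (fun η => deriv (fun ζ => p x ζ t) η) y)) :
    ∀ k l s : ℕ,
      ((s : ℝ) + 1) * uhat k l (s + 1) = Δt * vhat k l s
      ∧ ((s : ℝ) + 1) * vhat k l (s + 1)
          = c ^ 2 * ((k : ℝ) + 2) * ((k : ℝ) + 1) * (Δt / hx ^ 2) * uhat (k + 2) l s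
            + c ^ 2 * ((l : ℝ) + 2) * ((l : ℝ) + 1) * (Δt / hy ^ 2) * uhat k (l + 2) s := by
  classical
  set F : Finset (ℕ × ℕ × ℕ) := hus.toFinset ∪ hvs.toFinset with hF
  set M : ℕ := F.sup (fun r => max r.1 (max r.2.1 r.2.2)) with hMdef
  have hu0 : ∀ k l s, M + 2 ≤ k ∨ M + 2 ≤ l ∨ M + 2 ≤ s → uhat k l s = 0 := by
    intro k l s h
    by_contra hne
    have hmem : (k, l, s) ∈ F := Finset.mem_union_left _ (hus.mem_toFinset.2 hne)
    have hle : max k (max l s) ≤ M :=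
      Finset.le_sup (f := fun r : ℕ × ℕ × ℕ => max r.1 (max r.2.1 r.2.2)) hmem
    have hk := le_trans (le_max_left k (max l s)) hle
    have hl := le_trans (le_trans (le_max_left l s) (le_max_right k (max l s))) hle
    have hs := le_trans (le_trans (le_max_right l s) (le_max_right k (max l s))) hle
    omega
  have hv0 : ∀ k l s, M + 2 ≤ k ∨ M + 2 ≤ l ∨ M + 2 ≤ s → vhat k l s = 0 := by
    intro k l s h
    by_contra hne
    have hmem : (k, l, s) ∈ F := Finset.mem_union_right _ (hvs.mem_toFinset.2 hne)
    have hle : max k (max l s) ≤ M :=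
      Finset.le_sup (f := fun r : ℕ × ℕ × ℕ => max r.1 (max r.2.1 r.2.2)) hmem
    have hk := le_trans (le_max_left k (max l s)) hle
    have hl := le_trans (le_trans (le_max_left l s) (le_max_right k (max l s))) hle
    have hs := le_trans (le_trans (le_max_right l s) (le_max_right k (max l s))) hle
    omega
  have hpN : ∀ x y t, p x y t = ∑ k ∈ range (M + 2), ∑ l ∈ range (M + 2), ∑ s ∈ range (M + 2),
      uhat k l s * ((x - xc) / hx) ^ k * ((y - yc) / hy) ^ l * ((t - tn) / Δt) ^ s :=
    fun x y t => (hp x y t).trans (finsum_triple_eq (M + 2) uhat hu0 _ _ _)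
  have hqN : ∀ x y t, q x y t = ∑ k ∈ range (M + 2), ∑ l ∈ range (M + 2), ∑ s ∈ range (M + 2),
      vhat k l s * ((x - xc) / hx) ^ k * ((y - yc) / hy) ^ l * ((t - tn) / Δt) ^ s :=
    fun x y t => (hq x y t).trans (finsum_triple_eq (M + 2) vhat hv0 _ _ _)
  -- time derivatives
  have hDp : ∀ x y t, deriv (fun τ => p x y τ) t
      = ∑ k ∈ range (M + 2), ∑ l ∈ range (M + 2), ∑ s ∈ range (M + 2),
          uhat k l s * ((x - xc) / hx) ^ k * ((y - yc) / hy) ^ l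
            * ((s : ℝ) * ((t - tn) / Δt) ^ (s - 1) * (1 / Δt)) := by
    intro x y t
    have hfun : (fun τ => p x y τ) = fun τ =>
        ∑ k ∈ range (M + 2), ∑ l ∈ range (M + 2), ∑ s ∈ range (M + 2),
          (uhat k l s * ((x - xc) / hx) ^ k * ((y - yc) / hy) ^ l) * ((τ - tn) / Δt) ^ s :=
      funext fun τ => hpN x y τ
    rw [hfun]
    exact (hd_triple (M + 2) _ (fun _ _ s => s) tn Δt t).deriv
  have hDq : ∀ x y t, deriv (fun τ => q x y τ) t
      = ∑ k ∈ range (M + 2), ∑ l ∈ range (M + 2), ∑ s ∈ range (M + 2),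
          vhat k l s * ((x - xc) / hx) ^ k * ((y - yc) / hy) ^ l
            * ((s : ℝ) * ((t - tn) / Δt) ^ (s - 1) * (1 / Δt)) := by
    intro x y t
    have hfun : (fun τ => q x y τ) = fun τ =>
        ∑ k ∈ range (M + 2), ∑ l ∈ range (M + 2), ∑ s ∈ range (M + 2),
          (vhat k l s * ((x - xc) / hx) ^ k * ((y - yc) / hy) ^ l) * ((τ - tn) / Δt) ^ s :=
      funext fun τ => hqN x y τ
    rw [hfun]
    exact (hd_triple (M + 2) _ (fun _ _ s => s) tn Δt t).deriv
  -- first x-derivative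
  have hD1 : ∀ x y t, deriv (fun ζ => p ζ y t) x
      = ∑ k ∈ range (M + 2), ∑ l ∈ range (M + 2), ∑ s ∈ range (M + 2),
          (uhat k l s * ((y - yc) / hy) ^ l * ((t - tn) / Δt) ^ s)
            * ((k : ℝ) * ((x - xc) / hx) ^ (k - 1) * (1 / hx)) := by
    intro x y t
    have hfun : (fun ζ => p ζ y t) = fun ζ =>
        ∑ k ∈ range (M + 2), ∑ l ∈ range (M + 2), ∑ s ∈ range (M + 2),
          (uhat k l s * ((y - yc) / hy) ^ l * ((t - tn) / Δt) ^ s) * ((ζ - xc) / hx) ^ k := by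
      funext ζ
      rw [hpN ζ y t]
      exact sum_congr rfl fun k _ => sum_congr rfl fun l _ => sum_congr rfl fun s _ => by ring
    rw [hfun]
    exact (hd_triple (M + 2) _ (fun k _ _ => k) xc hx x).deriv
  -- second x-derivative
  have hD2 : ∀ x y t, deriv (fun ξ => deriv (fun ζ => p ζ y t) ξ) x
      = ∑ k ∈ range (M + 2), ∑ l ∈ range (M + 2), ∑ s ∈ range (M + 2),
          (uhat k l s * ((y - yc) / hy) ^ l * ((t - tn) / Δt) ^ s * (k : ℝ) * (1 / hx))
            * (((k - 1 : ℕ) : ℝ) * ((x - xc) / hx) ^ (k - 1 - 1) * (1 / hx)) := by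
    intro x y t
    have hfun : (fun ξ => deriv (fun ζ => p ζ y t) ξ) = fun ξ =>
        ∑ k ∈ range (M + 2), ∑ l ∈ range (M + 2), ∑ s ∈ range (M + 2),
          (uhat k l s * ((y - yc) / hy) ^ l * ((t - tn) / Δt) ^ s * (k : ℝ) * (1 / hx))
            * ((ξ - xc) / hx) ^ (k - 1) := by
      funext ξ
      rw [hD1 ξ y t]
      exact sum_congr rfl fun k _ => sum_congr rfl fun l _ => sum_congr rfl fun s _ => by ring
    rw [hfun]
    exact (hd_triple (M + 2) _ (fun k _ _ => k - 1) xc hx x).deriv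
  -- first y-derivative
  have hE1 : ∀ x y t, deriv (fun ζ => p x ζ t) y
      = ∑ k ∈ range (M + 2), ∑ l ∈ range (M + 2), ∑ s ∈ range (M + 2),
          (uhat k l s * ((x - xc) / hx) ^ k * ((t - tn) / Δt) ^ s)
            * ((l : ℝ) * ((y - yc) / hy) ^ (l - 1) * (1 / hy)) := by
    intro x y t
    have hfun : (fun ζ => p x ζ t) = fun ζ =>
        ∑ k ∈ range (M + 2), ∑ l ∈ range (M + 2), ∑ s ∈ range (M + 2),
          (uhat k l s * ((x - xc) / hx) ^ k * ((t - tn) / Δt) ^ s) * ((ζ - yc) / hy) ^ l := by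
      funext ζ
      rw [hpN x ζ t]
      exact sum_congr rfl fun k _ => sum_congr rfl fun l _ => sum_congr rfl fun s _ => by ring
    rw [hfun]
    exact (hd_triple (M + 2) _ (fun _ l _ => l) yc hy y).deriv
  -- second y-derivative
  have hE2 : ∀ x y t, deriv (fun η => deriv (fun ζ => p x ζ t) η) y
      = ∑ k ∈ range (M + 2), ∑ l ∈ range (M + 2), ∑ s ∈ range (M + 2),
          (uhat k l s * ((x - xc) / hx) ^ k * ((t - tn) / Δt) ^ s * (l : ℝ) * (1 / hy))
            * (((l - 1 : ℕ) : ℝ) * ((y - yc) / hy) ^ (l - 1 - 1) * (1 / hy)) := by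
    intro x y t
    have hfun : (fun η => deriv (fun ζ => p x ζ t) η) = fun η =>
        ∑ k ∈ range (M + 2), ∑ l ∈ range (M + 2), ∑ s ∈ range (M + 2),
          (uhat k l s * ((x - xc) / hx) ^ k * ((t - tn) / Δt) ^ s * (l : ℝ) * (1 / hy))
            * ((η - yc) / hy) ^ (l - 1) := by
      funext η
      rw [hE1 x η t]
      exact sum_congr rfl fun k _ => sum_congr rfl fun l _ => sum_congr rfl fun s _ => by ring
    rw [hfun]
    exact (hd_triple (M + 2) _ (fun _ l _ => l - 1) yc hy y).deriv
  -- substitutions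
  have hsx : ∀ X : ℝ, (xc + hx * X - xc) / hx = X := fun X => by field_simp; ring
  have hsy : ∀ Y : ℝ, (yc + hy * Y - yc) / hy = Y := fun Y => by field_simp; ring
  have hst : ∀ T : ℝ, (tn + Δt * T - tn) / Δt = T := fun T => by field_simp; ring
  -- Identity 1 in clean variables
  have I1 : ∀ X Y T : ℝ,
      (∑ k ∈ range (M + 2), ∑ l ∈ range (M + 2), ∑ s ∈ range (M + 2),
        uhat k l s * X ^ k * Y ^ l * ((s : ℝ) * T ^ (s - 1) * (1 / Δt)))
      = ∑ k ∈ range (M + 2), ∑ l ∈ range (M + 2), ∑ s ∈ range (M + 2),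
        vhat k l s * X ^ k * Y ^ l * T ^ s := by
    intro X Y T
    have h := eq1 (xc + hx * X) (yc + hy * Y) (tn + Δt * T)
    rw [hDp, hqN] at h
    simpa only [hsx X, hsy Y, hst T] using h
  -- canonicalize LHS of I1
  have L1 : ∀ X Y T : ℝ,
      (∑ k ∈ range (M + 2), ∑ l ∈ range (M + 2), ∑ s ∈ range (M + 2),
        uhat k l s * X ^ k * Y ^ l * ((s : ℝ) * T ^ (s - 1) * (1 / Δt)))
      = ∑ k ∈ range (M + 2), ∑ l ∈ range (M + 2), ∑ s ∈ range (M + 2),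
        (uhat k l (s + 1) * ((s : ℝ) + 1) / Δt) * X ^ k * Y ^ l * T ^ s := by
    intro X Y T
    refine sum_congr rfl fun k _ => sum_congr rfl fun l _ => ?_
    refine shift1 M _ _ ?_ ?_ ?_
    · simp
    · intro s
      simp only [Nat.add_sub_cancel]
      push_cast
      ring
    · rw [hu0 k l (M + 2) (Or.inr (Or.inr le_rfl))]
      ring
  have key1 : ∀ X Y T : ℝ,
      (∑ k ∈ range (M + 2), ∑ l ∈ range (M + 2), ∑ s ∈ range (M + 2),
        (uhat k l (s + 1) * ((s : ℝ) + 1) / Δt - vhat k l s) * X ^ k * Y ^ l * T ^ s) = 0 := by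
    intro X Y T
    have h := I1 X Y T
    rw [L1 X Y T] at h
    rw [show (∑ k ∈ range (M + 2), ∑ l ∈ range (M + 2), ∑ s ∈ range (M + 2),
        (uhat k l (s + 1) * ((s : ℝ) + 1) / Δt - vhat k l s) * X ^ k * Y ^ l * T ^ s)
      = (∑ k ∈ range (M + 2), ∑ l ∈ range (M + 2), ∑ s ∈ range (M + 2),
          (uhat k l (s + 1) * ((s : ℝ) + 1) / Δt) * X ^ k * Y ^ l * T ^ s)
        - ∑ k ∈ range (M + 2), ∑ l ∈ range (M + 2), ∑ s ∈ range (M + 2),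
          vhat k l s * X ^ k * Y ^ l * T ^ s from by
        simp only [← Finset.sum_sub_distrib]
        exact sum_congr rfl fun k _ => sum_congr rfl fun l _ => sum_congr rfl fun s _ => by ring]
    rw [h, sub_self]
  have hcoef1 := three_var_coeff (M + 2)
    (fun k l s => uhat k l (s + 1) * ((s : ℝ) + 1) / Δt - vhat k l s) key1
  -- Identity 2
  have I2 : ∀ X Y T : ℝ,
      (∑ k ∈ range (M + 2), ∑ l ∈ range (M + 2), ∑ s ∈ range (M + 2),
        vhat k l s * X ^ k * Y ^ l * ((s : ℝ) * T ^ (s - 1) * (1 / Δt)))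
      = c ^ 2 * ((∑ k ∈ range (M + 2), ∑ l ∈ range (M + 2), ∑ s ∈ range (M + 2),
            (uhat k l s * Y ^ l * T ^ s * (k : ℝ) * (1 / hx))
              * (((k - 1 : ℕ) : ℝ) * X ^ (k - 1 - 1) * (1 / hx)))
          + ∑ k ∈ range (M + 2), ∑ l ∈ range (M + 2), ∑ s ∈ range (M + 2),
            (uhat k l s * X ^ k * T ^ s * (l : ℝ) * (1 / hy))
              * (((l - 1 : ℕ) : ℝ) * Y ^ (l - 1 - 1) * (1 / hy))) := by
    intro X Y T
    have h := eq2 (xc + hx * X) (yc + hy * Y) (tn + Δt * T)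
    rw [hDq, hD2, hE2] at h
    simpa only [hsx X, hsy Y, hst T] using h
  -- canonicalize LHS of I2
  have L2 : ∀ X Y T : ℝ,
      (∑ k ∈ range (M + 2), ∑ l ∈ range (M + 2), ∑ s ∈ range (M + 2),
        vhat k l s * X ^ k * Y ^ l * ((s : ℝ) * T ^ (s - 1) * (1 / Δt)))
      = ∑ k ∈ range (M + 2), ∑ l ∈ range (M + 2), ∑ s ∈ range (M + 2),
        (vhat k l (s + 1) * ((s : ℝ) + 1) / Δt) * X ^ k * Y ^ l * T ^ s := by
    intro X Y T
    refine sum_congr rfl fun k _ => sum_congr rfl fun l _ => ?_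
    refine shift1 M _ _ ?_ ?_ ?_
    · simp
    · intro s
      simp only [Nat.add_sub_cancel]
      push_cast
      ring
    · rw [hv0 k l (M + 2) (Or.inr (Or.inr le_rfl))]
      ring
  -- canonicalize x-part of RHS of I2
  have R2x : ∀ X Y T : ℝ,
      (∑ k ∈ range (M + 2), ∑ l ∈ range (M + 2), ∑ s ∈ range (M + 2),
        (uhat k l s * Y ^ l * T ^ s * (k : ℝ) * (1 / hx))
          * (((k - 1 : ℕ) : ℝ) * X ^ (k - 1 - 1) * (1 / hx)))
      = ∑ k ∈ range (M + 2), ∑ l ∈ range (M + 2), ∑ s ∈ range (M + 2),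
        (uhat (k + 2) l s * (((k : ℝ) + 2) * ((k : ℝ) + 1) / hx ^ 2)) * X ^ k * Y ^ l * T ^ s := by
    intro X Y T
    refine shift2 M _ _ ?_ ?_ ?_ ?_ ?_
    · exact Finset.sum_eq_zero fun l _ => Finset.sum_eq_zero fun s _ => by simp
    · exact Finset.sum_eq_zero fun l _ => Finset.sum_eq_zero fun s _ => by simp
    · intro k
      refine sum_congr rfl fun l _ => sum_congr rfl fun s _ => ?_
      simp only [show k + 2 - 1 = k + 1 from rfl, show k + 1 - 1 = k from rfl]
      push_cast
      ring
    · exact Finset.sum_eq_zero fun l _ => Finset.sum_eq_zero fun s _ => by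
        rw [hu0 (M + 2) l s (Or.inl le_rfl)]; ring
    · exact Finset.sum_eq_zero fun l _ => Finset.sum_eq_zero fun s _ => by
        rw [hu0 (M + 1 + 2) l s (Or.inl (by omega))]; ring
  -- canonicalize y-part of RHS of I2
  have R2y : ∀ X Y T : ℝ,
      (∑ k ∈ range (M + 2), ∑ l ∈ range (M + 2), ∑ s ∈ range (M + 2),
        (uhat k l s * X ^ k * T ^ s * (l : ℝ) * (1 / hy))
          * (((l - 1 : ℕ) : ℝ) * Y ^ (l - 1 - 1) * (1 / hy)))
      = ∑ k ∈ range (M + 2), ∑ l ∈ range (M + 2), ∑ s ∈ range (M + 2),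
        (uhat k (l + 2) s * (((l : ℝ) + 2) * ((l : ℝ) + 1) / hy ^ 2)) * X ^ k * Y ^ l * T ^ s := by
    intro X Y T
    refine sum_congr rfl fun k _ => ?_
    refine shift2 M _ _ ?_ ?_ ?_ ?_ ?_
    · exact Finset.sum_eq_zero fun s _ => by simp
    · exact Finset.sum_eq_zero fun s _ => by simp
    · intro l
      refine sum_congr rfl fun s _ => ?_
      simp only [show l + 2 - 1 = l + 1 from rfl, show l + 1 - 1 = l from rfl]
      push_cast
      ring
    · exact Finset.sum_eq_zero fun s _ => by
        rw [hu0 k (M + 2) s (Or.inr (Or.inl le_rfl))]; ring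
    · exact Finset.sum_eq_zero fun s _ => by
        rw [hu0 k (M + 1 + 2) s (Or.inr (Or.inl (by omega)))]; ring
  have key2 : ∀ X Y T : ℝ,
      (∑ k ∈ range (M + 2), ∑ l ∈ range (M + 2), ∑ s ∈ range (M + 2),
        (vhat k l (s + 1) * ((s : ℝ) + 1) / Δt
          - c ^ 2 * (uhat (k + 2) l s * (((k : ℝ) + 2) * ((k : ℝ) + 1) / hx ^ 2)
              + uhat k (l + 2) s * (((l : ℝ) + 2) * ((l : ℝ) + 1) / hy ^ 2)))
          * X ^ k * Y ^ l * T ^ s) = 0 := by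
    intro X Y T
    have h := I2 X Y T
    rw [L2 X Y T, R2x X Y T, R2y X Y T] at h
    rw [show (∑ k ∈ range (M + 2), ∑ l ∈ range (M + 2), ∑ s ∈ range (M + 2),
        (vhat k l (s + 1) * ((s : ℝ) + 1) / Δt
          - c ^ 2 * (uhat (k + 2) l s * (((k : ℝ) + 2) * ((k : ℝ) + 1) / hx ^ 2)
              + uhat k (l + 2) s * (((l : ℝ) + 2) * ((l : ℝ) + 1) / hy ^ 2)))
          * X ^ k * Y ^ l * T ^ s)
      = (∑ k ∈ range (M + 2), ∑ l ∈ range (M + 2), ∑ s ∈ range (M + 2),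
          (vhat k l (s + 1) * ((s : ℝ) + 1) / Δt) * X ^ k * Y ^ l * T ^ s)
        - c ^ 2 * ((∑ k ∈ range (M + 2), ∑ l ∈ range (M + 2), ∑ s ∈ range (M + 2),
            (uhat (k + 2) l s * (((k : ℝ) + 2) * ((k : ℝ) + 1) / hx ^ 2)) * X ^ k * Y ^ l * T ^ s)
          + ∑ k ∈ range (M + 2), ∑ l ∈ range (M + 2), ∑ s ∈ range (M + 2),
            (uhat k (l + 2) s * (((l : ℝ) + 2) * ((l : ℝ) + 1) / hy ^ 2)) * X ^ k * Y ^ l * T ^ s) from by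
        simp only [Finset.mul_sum, ← Finset.sum_add_distrib, ← Finset.sum_sub_distrib]
        exact sum_congr rfl fun k _ => sum_congr rfl fun l _ => sum_congr rfl fun s _ => by ring]
    rw [h, sub_self]
  have hcoef2 := three_var_coeff (M + 2)
    (fun k l s => vhat k l (s + 1) * ((s : ℝ) + 1) / Δt
      - c ^ 2 * (uhat (k + 2) l s * (((k : ℝ) + 2) * ((k : ℝ) + 1) / hx ^ 2)
          + uhat k (l + 2) s * (((l : ℝ) + 2) * ((l : ℝ) + 1) / hy ^ 2))) key2
  -- conclusion
  intro k l s
  constructor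
  · by_cases hcase : k < M + 2 ∧ l < M + 2 ∧ s < M + 2
    · have ha := hcoef1 k l s hcase.1 hcase.2.1 hcase.2.2
      have h' : uhat k l (s + 1) * ((s : ℝ) + 1) / Δt = vhat k l s := sub_eq_zero.mp ha
      rw [div_eq_iff hΔt.ne'] at h'
      linear_combination h'
    · rw [not_and_or, not_and_or] at hcase
      push_neg at hcase
      have h1 : uhat k l (s + 1) = 0 := hu0 _ _ _ (by omega)
      have h2 : vhat k l s = 0 := hv0 _ _ _ (by omega)
      rw [h1, h2]
      ring
  · by_cases hcase : k < M + 2 ∧ l < M + 2 ∧ s < M + 2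
    · have hb := hcoef2 k l s hcase.1 hcase.2.1 hcase.2.2
      have h' : vhat k l (s + 1) * ((s : ℝ) + 1) / Δt
          = c ^ 2 * (uhat (k + 2) l s * (((k : ℝ) + 2) * ((k : ℝ) + 1) / hx ^ 2)
              + uhat k (l + 2) s * (((l : ℝ) + 2) * ((l : ℝ) + 1) / hy ^ 2)) := sub_eq_zero.mp hb
      rw [div_eq_iff hΔt.ne'] at h'
      linear_combination h'
    · rw [not_and_or, not_and_or] at hcase
      push_neg at hcase
      have h1 : vhat k l (s + 1) = 0 := hv0 _ _ _ (by omega)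
      have h2 : uhat (k + 2) l s = 0 := hu0 _ _ _ (by omega)
      have h3 : uhat k (l + 2) s = 0 := hu0 _ _ _ (by omega)
      rw [h1, h2, h3]
      ring
end
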